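/- At each of the two points (π, arccos((√5−1)/2), π − (1/2)·arctan(2√(2+√5))) and (0, arccos((√5−1)/2), (1/2)·arctan(2√(2+√5))), the gradient of L₁ vanishes, L₁ takes the value 1/4, and the Hessian matrix of L₁ has both a strictly positive and a strictly negative eigenvalue; hence these points are saddle points of L₁. -/

import Mathlib

open Matrix

/-- The kinematic landscape function `L₁(Ω,β₁,β₂)`. -/
noncomputable def L1 (Ω β₁ β₂ : ℝ) : ℝ :=
  (1/8) * Real.sin β₂ ^ 2 * (3 + Real.cos (2*β₁))
  + (1/2) * Real.sin β₁ ^ 2 * Real.cos β₂ ^ 2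
  - (1/2) * Real.cos Ω * Real.sin β₁ * Real.sin (β₁/2) ^ 2 * Real.sin (2*β₂)

/-- `L₁` as a function on `ℝ³`. -/
noncomputable def L1v (v : Fin 3 → ℝ) : ℝ := L1 (v 0) (v 1) (v 2)

/-- Hessian matrix of second partial derivatives of `f : ℝⁿ → ℝ` at `p`. -/
noncomputable def hessian {n : ℕ} (f : (Fin n → ℝ) → ℝ) (p : Fin n → ℝ) :
    Matrix (Fin n) (Fin n) ℝ :=
  Matrix.of fun i j => fderiv ℝ (fun y => fderiv ℝ f y (Pi.single j 1)) p (Pi.single i 1)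

noncomputable def pr (i : Fin 3) : (Fin 3 → ℝ) →L[ℝ] ℝ := ContinuousLinearMap.proj i

/-- partial derivatives of L1v -/
noncomputable def P0 (v : Fin 3 → ℝ) : ℝ :=
  (1/2) * Real.sin (v 0) * Real.sin (v 1) * (Real.sin (v 1/2) * Real.sin (v 1/2)) * Real.sin (2*v 2)

noncomputable def P1 (v : Fin 3 → ℝ) : ℝ :=
  (-(1/4) : ℝ) * (Real.sin (v 2) * Real.sin (v 2)) * Real.sin (2*v 1)
  + Real.sin (v 1) * Real.cos (v 1) * (Real.cos (v 2) * Real.cos (v 2))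
  - (1/2) * Real.cos (v 0) *
      (Real.cos (v 1) * (Real.sin (v 1/2) * Real.sin (v 1/2))
        + Real.sin (v 1) * (Real.sin (v 1/2) * Real.cos (v 1/2))) * Real.sin (2*v 2)

noncomputable def P2 (v : Fin 3 → ℝ) : ℝ :=
  (1/4) * (Real.sin (v 2) * Real.cos (v 2)) * (3 + Real.cos (2*v 1))
  - Real.sin (v 1) * Real.sin (v 1) * (Real.sin (v 2) * Real.cos (v 2))
  - Real.cos (v 0) * Real.sin (v 1) * (Real.sin (v 1/2) * Real.sin (v 1/2)) * Real.cos (2*v 2)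

/-- second partial derivatives -/
noncomputable def Q00 (v : Fin 3 → ℝ) : ℝ :=
  (1/2) * Real.cos (v 0) * Real.sin (v 1) * (Real.sin (v 1/2) * Real.sin (v 1/2)) * Real.sin (2*v 2)

noncomputable def Q10 (v : Fin 3 → ℝ) : ℝ :=
  (1/2) * Real.sin (v 0) *
    (Real.cos (v 1) * (Real.sin (v 1/2) * Real.sin (v 1/2))
      + Real.sin (v 1) * (Real.sin (v 1/2) * Real.cos (v 1/2))) * Real.sin (2*v 2)

noncomputable def Q20 (v : Fin 3 → ℝ) : ℝ :=
  Real.sin (v 0) * Real.sin (v 1) * (Real.sin (v 1/2) * Real.sin (v 1/2)) * Real.cos (2*v 2)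

noncomputable def Q11 (v : Fin 3 → ℝ) : ℝ :=
  (-(1/2) : ℝ) * (Real.sin (v 2) * Real.sin (v 2)) * Real.cos (2*v 1)
  + (Real.cos (v 1) * Real.cos (v 1) - Real.sin (v 1) * Real.sin (v 1)) *
      (Real.cos (v 2) * Real.cos (v 2))
  - (1/2) * Real.cos (v 0) *
      ((-(1:ℝ)) * Real.sin (v 1) * (Real.sin (v 1/2) * Real.sin (v 1/2))
        + 2 * Real.cos (v 1) * (Real.sin (v 1/2) * Real.cos (v 1/2))
        + (1/2) * Real.sin (v 1) *
            (Real.cos (v 1/2) * Real.cos (v 1/2) - Real.sin (v 1/2) * Real.sin (v 1/2)))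
      * Real.sin (2*v 2)

noncomputable def Q21 (v : Fin 3 → ℝ) : ℝ :=
  (-(1/2) : ℝ) * (Real.sin (v 2) * Real.cos (v 2)) * Real.sin (2*v 1)
  - 2 * (Real.sin (v 1) * Real.cos (v 1)) * (Real.sin (v 2) * Real.cos (v 2))
  - Real.cos (v 0) *
      (Real.cos (v 1) * (Real.sin (v 1/2) * Real.sin (v 1/2))
        + Real.sin (v 1) * (Real.sin (v 1/2) * Real.cos (v 1/2))) * Real.cos (2*v 2)

noncomputable def Q22 (v : Fin 3 → ℝ) : ℝ :=
  (1/4) * (Real.cos (v 2) * Real.cos (v 2) - Real.sin (v 2) * Real.sin (v 2)) * (3 + Real.cos (2*v 1))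
  - Real.sin (v 1) * Real.sin (v 1) *
      (Real.cos (v 2) * Real.cos (v 2) - Real.sin (v 2) * Real.sin (v 2))
  + 2 * Real.cos (v 0) * Real.sin (v 1) * (Real.sin (v 1/2) * Real.sin (v 1/2)) * Real.sin (2*v 2)

noncomputable def D1 (v : Fin 3 → ℝ) : (Fin 3 → ℝ) →L[ℝ] ℝ :=
  P0 v • pr 0 + P1 v • pr 1 + P2 v • pr 2

noncomputable def E0 (v : Fin 3 → ℝ) : (Fin 3 → ℝ) →L[ℝ] ℝ :=
  Q00 v • pr 0 + Q10 v • pr 1 + Q20 v • pr 2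

noncomputable def E1 (v : Fin 3 → ℝ) : (Fin 3 → ℝ) →L[ℝ] ℝ :=
  Q10 v • pr 0 + Q11 v • pr 1 + Q21 v • pr 2

noncomputable def E2 (v : Fin 3 → ℝ) : (Fin 3 → ℝ) →L[ℝ] ℝ :=
  Q20 v • pr 0 + Q21 v • pr 1 + Q22 v • pr 2

lemma hf_coord (i : Fin 3) (v : Fin 3 → ℝ) :
    HasFDerivAt (fun w : Fin 3 → ℝ => w i) (pr i) v :=
  (ContinuousLinearMap.proj i : (Fin 3 → ℝ) →L[ℝ] ℝ).hasFDerivAt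

lemma hf_sin (i : Fin 3) (v : Fin 3 → ℝ) :
    HasFDerivAt (fun w : Fin 3 → ℝ => Real.sin (w i)) (Real.cos (v i) • pr i) v :=
  by exact (Real.hasDerivAt_sin (v i)).comp_hasFDerivAt v (hf_coord i v)

lemma hf_cos (i : Fin 3) (v : Fin 3 → ℝ) :
    HasFDerivAt (fun w : Fin 3 → ℝ => Real.cos (w i)) ((-Real.sin (v i)) • pr i) v :=
  by exact (Real.hasDerivAt_cos (v i)).comp_hasFDerivAt v (hf_coord i v)

lemma hf_sin2 (i : Fin 3) (v : Fin 3 → ℝ) :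
    HasFDerivAt (fun w : Fin 3 → ℝ => Real.sin (2 * w i)) ((2 * Real.cos (2 * v i)) • pr i) v := by
  have hd : HasDerivAt (fun x : ℝ => Real.sin (2 * x)) (2 * Real.cos (2 * v i)) (v i) := by
    have := ((hasDerivAt_id (v i)).const_mul (2:ℝ)).sin
    simpa [mul_comm] using this
  exact hd.comp_hasFDerivAt v (hf_coord i v)

lemma hf_cos2 (i : Fin 3) (v : Fin 3 → ℝ) :
    HasFDerivAt (fun w : Fin 3 → ℝ => Real.cos (2 * w i)) ((-2 * Real.sin (2 * v i)) • pr i) v := by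
  have hd : HasDerivAt (fun x : ℝ => Real.cos (2 * x)) (-2 * Real.sin (2 * v i)) (v i) := by
    have := ((hasDerivAt_id (v i)).const_mul (2:ℝ)).cos
    simpa [mul_comm] using this
  exact hd.comp_hasFDerivAt v (hf_coord i v)

lemma hf_sinh (i : Fin 3) (v : Fin 3 → ℝ) :
    HasFDerivAt (fun w : Fin 3 → ℝ => Real.sin (w i / 2)) ((Real.cos (v i / 2) / 2) • pr i) v := by
  have hd : HasDerivAt (fun x : ℝ => Real.sin (x / 2)) (Real.cos (v i / 2) / 2) (v i) := by
    have := ((hasDerivAt_id (v i)).div_const (2:ℝ)).sin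
    simpa [div_eq_mul_inv] using this
  exact hd.comp_hasFDerivAt v (hf_coord i v)

lemma hf_cosh (i : Fin 3) (v : Fin 3 → ℝ) :
    HasFDerivAt (fun w : Fin 3 → ℝ => Real.cos (w i / 2)) ((-Real.sin (v i / 2) / 2) • pr i) v := by
  have hd : HasDerivAt (fun x : ℝ => Real.cos (x / 2)) (-Real.sin (v i / 2) / 2) (v i) := by
    have := ((hasDerivAt_id (v i)).div_const (2:ℝ)).cos
    simpa [neg_div, div_eq_mul_inv] using this
  exact hd.comp_hasFDerivAt v (hf_coord i v)

lemma hasF (v : Fin 3 → ℝ) : HasFDerivAt L1v (D1 v) v := by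
  have hfun : L1v = fun w : Fin 3 → ℝ =>
      (1/8) * (Real.sin (w 2) * Real.sin (w 2)) * (3 + Real.cos (2 * w 1))
      + (1/2) * (Real.sin (w 1) * Real.sin (w 1)) * (Real.cos (w 2) * Real.cos (w 2))
      - (1/2) * Real.cos (w 0) * Real.sin (w 1) * (Real.sin (w 1 / 2) * Real.sin (w 1 / 2))
          * Real.sin (2 * w 2) := by
    funext w
    simp only [L1v, L1]
    ring
  rw [hfun]
  have t1 := (((hf_sin 2 v).mul (hf_sin 2 v)).const_mul (1/8 : ℝ)).mul
    ((hasFDerivAt_const (3:ℝ) v).add (hf_cos2 1 v))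
  have t2 := (((hf_sin 1 v).mul (hf_sin 1 v)).const_mul (1/2 : ℝ)).mul
    ((hf_cos 2 v).mul (hf_cos 2 v))
  have t3 := ((((hf_cos 0 v).const_mul (1/2 : ℝ)).mul (hf_sin 1 v)).mul
    ((hf_sinh 1 v).mul (hf_sinh 1 v))).mul (hf_sin2 2 v)
  have big := (t1.add t2).sub t3
  refine big.congr_fderiv ?_
  ext x
  simp [D1, P0, P1, P2, pr]
  ring

lemma hasFP0 (v : Fin 3 → ℝ) : HasFDerivAt P0 (E0 v) v := by
  unfold P0
  have big := ((((hf_sin 0 v).const_mul (1/2 : ℝ)).mul (hf_sin 1 v)).mul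
    ((hf_sinh 1 v).mul (hf_sinh 1 v))).mul (hf_sin2 2 v)
  refine big.congr_fderiv ?_
  ext x
  simp [E0, Q00, Q10, Q20, pr]
  ring

lemma hasFP1 (v : Fin 3 → ℝ) : HasFDerivAt P1 (E1 v) v := by
  unfold P1
  have t1 := (((hf_sin 2 v).mul (hf_sin 2 v)).const_mul ((-(1/4)) : ℝ)).mul (hf_sin2 1 v)
  have t2 := ((hf_sin 1 v).mul (hf_cos 1 v)).mul ((hf_cos 2 v).mul (hf_cos 2 v))
  have inner := ((hf_cos 1 v).mul ((hf_sinh 1 v).mul (hf_sinh 1 v))).add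
    ((hf_sin 1 v).mul ((hf_sinh 1 v).mul (hf_cosh 1 v)))
  have t3 := (((hf_cos 0 v).const_mul (1/2 : ℝ)).mul inner).mul (hf_sin2 2 v)
  have big := (t1.add t2).sub t3
  refine big.congr_fderiv ?_
  ext x
  simp [E1, Q10, Q11, Q21, pr]
  ring

lemma hasFP2 (v : Fin 3 → ℝ) : HasFDerivAt P2 (E2 v) v := by
  unfold P2
  have t1 := (((hf_sin 2 v).mul (hf_cos 2 v)).const_mul (1/4 : ℝ)).mul
    ((hasFDerivAt_const (3:ℝ) v).add (hf_cos2 1 v))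
  have t2 := ((hf_sin 1 v).mul (hf_sin 1 v)).mul ((hf_sin 2 v).mul (hf_cos 2 v))
  have t3 := (((hf_cos 0 v).mul (hf_sin 1 v)).mul ((hf_sinh 1 v).mul (hf_sinh 1 v))).mul
    (hf_cos2 2 v)
  have big := (t1.sub t2).sub t3
  refine big.congr_fderiv ?_
  ext x
  simp [E2, Q20, Q21, Q22, pr]
  ring

lemma hcol0 : (fun y => fderiv ℝ L1v y (Pi.single (0 : Fin 3) 1)) = P0 := by
  funext y
  rw [(hasF y).fderiv]
  simp [D1, pr, Pi.single_apply]

lemma hcol1 : (fun y => fderiv ℝ L1v y (Pi.single (1 : Fin 3) 1)) = P1 := by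
  funext y
  rw [(hasF y).fderiv]
  simp [D1, pr, Pi.single_apply]

lemma hcol2 : (fun y => fderiv ℝ L1v y (Pi.single (2 : Fin 3) 1)) = P2 := by
  funext y
  rw [(hasF y).fderiv]
  simp [D1, pr, Pi.single_apply]

lemma hess_entry (p : Fin 3 → ℝ) :
    hessian L1v p 0 0 = Q00 p ∧ hessian L1v p 1 0 = Q10 p ∧ hessian L1v p 2 0 = Q20 p ∧
    hessian L1v p 0 1 = Q10 p ∧ hessian L1v p 1 1 = Q11 p ∧ hessian L1v p 2 1 = Q21 p ∧
    hessian L1v p 0 2 = Q20 p ∧ hessian L1v p 1 2 = Q21 p ∧ hessian L1v p 2 2 = Q22 p := by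
  simp only [hessian, Matrix.of_apply, hcol0, hcol1, hcol2,
    (hasFP0 p).fderiv, (hasFP1 p).fderiv, (hasFP2 p).fderiv]
  simp [E0, E1, E2, pr, Pi.single_apply]

lemma numfacts (a : ℝ) (ha2 : a^2 = 1 - a) (hapos : 0 < a) :
    1/2 < a ∧ a < 2/3 ∧ a < 1 ∧ a/2 < a^2 := by
  refine ⟨by nlinarith, by nlinarith, by nlinarith, by nlinarith⟩

set_option maxHeartbeats 2000000 in
lemma key (p : Fin 3 → ℝ) (a r e : ℝ)
    (ha2 : a^2 = 1 - a) (hr2 : r^2 = a) (hrpos : 0 < r) (he2 : e^2 = 1)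
    (hs0 : Real.sin (p 0) = 0) (hc0 : Real.cos (p 0) = e)
    (hs1 : Real.sin (p 1) = r) (hc1 : Real.cos (p 1) = a)
    (hs2sq : Real.sin (p 2)^2 = 1 - a) (hc2sq : Real.cos (p 2)^2 = a)
    (hs2c2 : Real.sin (p 2) * Real.cos (p 2) = e * (a * r)) :
    fderiv ℝ L1v p = 0
    ∧ L1v p = 1/4
    ∧ (∃ (c : ℝ) (v : Fin 3 → ℝ), 0 < c ∧ v ≠ 0 ∧ (hessian L1v p).mulVec v = c • v)
    ∧ (∃ (c : ℝ) (v : Fin 3 → ℝ), c < 0 ∧ v ≠ 0 ∧ (hessian L1v p).mulVec v = c • v) := by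
  -- basic bounds
  have hapos : 0 < a := hr2 ▸ pow_pos hrpos 2
  obtain ⟨hahalf, ha23, halt1, hAC2⟩ := numfacts a ha2 hapos
  -- derived trig values
  have hs2s2 : Real.sin (p 2) * Real.sin (p 2) = 1 - a := by rw [← hs2sq]; ring
  have hc2c2 : Real.cos (p 2) * Real.cos (p 2) = a := by rw [← hc2sq]; ring
  have hchch : Real.cos (p 1/2) * Real.cos (p 1/2) = (1+a)/2 := by
    have h := Real.cos_two_mul (p 1/2)
    rw [show 2*(p 1/2) = p 1 by ring, hc1] at h
    linear_combination (-(1/2)) * h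
  have hshsh : Real.sin (p 1/2) * Real.sin (p 1/2) = (1-a)/2 := by
    have hpy := Real.sin_sq_add_cos_sq (p 1/2)
    linear_combination hpy - hchch
  have hshch : Real.sin (p 1/2) * Real.cos (p 1/2) = r/2 := by
    have h := Real.sin_two_mul (p 1/2)
    rw [show 2*(p 1/2) = p 1 by ring, hs1] at h
    linear_combination (-(1/2)) * h
  have hs21 : Real.sin (2*p 1) = 2*(a*r) := by
    rw [Real.sin_two_mul, hs1, hc1]; ring
  have hc21 : Real.cos (2*p 1) = 2*a^2 - 1 := by
    rw [Real.cos_two_mul, hc1]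
  have hs22 : Real.sin (2*p 2) = 2*(e*(a*r)) := by
    rw [Real.sin_two_mul, mul_assoc, hs2c2]
  have hc22 : Real.cos (2*p 2) = 2*a - 1 := by
    rw [Real.cos_two_mul, hc2sq]
  -- gradient values
  have hP0 : P0 p = 0 := by simp only [P0]; rw [hs0]; ring
  have hP1 : P1 p = 0 := by
    simp only [P1]
    rw [hs2s2, hc2c2, hshsh, hshch, hs21, hs22, hs1, hc1, hc0]
    linear_combination (((-1/2)*a*r^3) + ((-1/2)*a^2*r) + ((1/2)*a^3*r)) * he2
      + (((-1/2)*a*r)) * hr2 + (((1/2)*a*r)) * ha2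
  have hP2 : P2 p = 0 := by
    simp only [P2]
    rw [hs2c2, hshsh, hc21, hc22, hs1, hc0]
    linear_combination ((-1*a*r*e)) * hr2 + (((-1/2)*r*e) + ((1/2)*a*r*e)) * ha2
  -- value of L1
  have hshsq : Real.sin (p 1/2)^2 = (1-a)/2 := by rw [pow_two]; exact hshsh
  have hval : L1v p = 1/4 := by
    simp only [L1v, L1]
    rw [hs2sq, hc2sq, hshsq, hc21, hs22, hs1, hc0]
    linear_combination (((-1/2)*a*r^2) + ((1/2)*a^2*r^2)) * he2 + (((1/2)*a^2)) * hr2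
      + (((1/4)*a)) * ha2
  -- Hessian entry values
  have hQ00 : Q00 p = (2-3*a)/2 := by
    simp only [Q00]
    rw [hshsh, hs22, hs1, hc0]
    linear_combination (((1/2)*a*r^2) + ((-1/2)*a^2*r^2)) * he2
      + (((1/2)*a) + ((-1/2)*a^2)) * hr2 + ((1) + ((-1/2)*a)) * ha2
  have hQ10 : Q10 p = 0 := by simp only [Q10]; rw [hs0]; ring
  have hQ20 : Q20 p = 0 := by simp only [Q20]; rw [hs0]; ring
  have hQ11 : Q11 p = -a^2 := by
    simp only [Q11]
    rw [hs2s2, hc2c2, hchch, hshsh, hshch, hc21, hs22, hs1, hc1, hc0]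
    linear_combination (((1/2)*a*r^2) + (-2*a^2*r^2)) * he2
      + (((-1/2)*a) + (-2*a^2)) * hr2 + (((-1/2))) * ha2
  have hQ21 : Q21 p = -(e*((2*a-1)*(5+3*a)))/2 := by
    simp only [Q21]
    rw [hs2c2, hshsh, hshch, hs21, hc22, hs1, hc1, hc0]
    linear_combination (((1/2)*e) + (-1*a*e) + (-3*a^2*e)) * hr2
      + (((5/2)*e) + (-2*a*e)) * ha2
  have hQ22 : Q22 p = a/2 := by
    simp only [Q22]
    rw [hs2s2, hc2c2, hshsh, hc21, hs22, hs1, hc0]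
    linear_combination ((2*a*r^2) + (-2*a^2*r^2)) * he2 + ((1) + (-2*a^2)) * hr2
      + (((1/2)) + (-1*a)) * ha2
  obtain ⟨h00, h10, h20, h01, h11, h21, h02, h12, h22⟩ := hess_entry p
  rw [hQ00] at h00; rw [hQ10] at h10 h01; rw [hQ20] at h20 h02
  rw [hQ11] at h11; rw [hQ21] at h21 h12; rw [hQ22] at h22
  have hM : hessian L1v p = Matrix.of ![![(2-3*a)/2, 0, 0],
      ![0, -a^2, -(e*((2*a-1)*(5+3*a)))/2],
      ![0, -(e*((2*a-1)*(5+3*a)))/2, a/2]] := by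
    ext i j
    fin_cases i <;> fin_cases j <;>
      simp only [Matrix.of_apply, Matrix.cons_val', Matrix.cons_val_zero, Matrix.cons_val_one,
        Matrix.head_cons, Matrix.empty_val', Matrix.cons_val_fin_one, Matrix.head_fin_const]
    · exact h00
    · exact h01
    · exact h02
    · exact h10
    · exact h11
    · exact h12
    · exact h20
    · exact h21
    · exact h22
  refine ⟨?_, hval, ?_, ?_⟩
  · -- gradient vanishes
    rw [(hasF p).fderiv]
    ext x
    simp [D1, pr, hP0, hP1, hP2]
  · -- positive eigenvalue
    have hcpos : (0:ℝ) < (2-3*a)/2 := by linarith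
    refine ⟨(2-3*a)/2, ![1,0,0], hcpos, ?_, ?_⟩
    · intro h
      have := congrFun h 0
      simp at this
    · rw [hM]
      funext i
      fin_cases i <;>
        simp [Matrix.mulVec, dotProduct, Fin.sum_univ_three]
  · -- negative eigenvalue
    set A := (-a^2 : ℝ) with hA
    set B := (-(e*((2*a-1)*(5+3*a)))/2 : ℝ) with hB
    set C := (a/2 : ℝ) with hC
    have hDnn : (0:ℝ) ≤ (A-C)^2 + 4*B^2 := by positivity
    have hsqD : (Real.sqrt ((A-C)^2 + 4*B^2))^2 = (A-C)^2 + 4*B^2 := Real.sq_sqrt hDnn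
    set lam := ((A+C) - Real.sqrt ((A-C)^2 + 4*B^2))/2 with hlam
    have hchar : lam^2 - (A+C)*lam + (A*C - B^2) = 0 := by
      have h1 : (A+C) - 2*lam = Real.sqrt ((A-C)^2 + 4*B^2) := by rw [hlam]; ring
      have h2 : ((A+C) - 2*lam)^2 = (A-C)^2 + 4*B^2 := by rw [h1]; exact hsqD
      linear_combination (1/4) * h2
    have hBne : B ≠ 0 := by
      have h2 : (0:ℝ) < (2*a-1)*(5+3*a) := mul_pos (by linarith) (by linarith)
      have he1 : e = 1 ∨ e = -1 := mul_self_eq_one_iff.mp (by linear_combination he2)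
      rw [hB]
      rcases he1 with h | h <;> rw [h] <;> intro hcon <;> linarith [hcon]
    have hlamneg : lam < 0 := by
      have h1 : A + C < 0 := by
        rw [hA, hC]; linarith [hAC2]
      have h2 : 0 ≤ Real.sqrt ((A-C)^2 + 4*B^2) := Real.sqrt_nonneg _
      rw [hlam]; linarith
    refine ⟨lam, ![0, B, lam - A], hlamneg, ?_, ?_⟩
    · intro h
      have := congrFun h 1
      simp at this
      exact hBne this
    · rw [hM]
      funext i
      fin_cases i <;>
        simp [Matrix.mulVec, dotProduct, Fin.sum_univ_three]
      · ring
      · linear_combination -hchar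

open Real in
lemma sqrt5_facts : (Real.sqrt 5)^2 = 5 ∧ 1 < Real.sqrt 5 ∧ Real.sqrt 5 ≤ 3 := by
  have h := Real.sq_sqrt (by norm_num : (5:ℝ) ≥ 0)
  have hnn := Real.sqrt_nonneg 5
  exact ⟨h, by nlinarith, by nlinarith⟩


open Real in
/-- at the two listed points the gradient of L₁ vanishes, L₁ = 1/4, and the Hessian has both a strictly positive and a strictly negative eigenvalue: these are saddle points. -/
theorem stmt7 (p : Fin 3 → ℝ)
    (hp : p = ![π, arccos ((Real.sqrt 5 - 1)/2), π - (1/2) * arctan (2 * Real.sqrt (2 + Real.sqrt 5))]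
      ∨ p = ![0, arccos ((Real.sqrt 5 - 1)/2), (1/2) * arctan (2 * Real.sqrt (2 + Real.sqrt 5))]) :
    -- the gradient of L₁ vanishes at p
    fderiv ℝ L1v p = 0
    -- L₁ takes the value 1/4 at p
    ∧ L1v p = 1/4
    -- the Hessian has a strictly positive eigenvalue
    ∧ (∃ (c : ℝ) (v : Fin 3 → ℝ), 0 < c ∧ v ≠ 0 ∧ (hessian L1v p).mulVec v = c • v)
    -- and a strictly negative eigenvalue (hence p is a saddle point)
    ∧ (∃ (c : ℝ) (v : Fin 3 → ℝ), c < 0 ∧ v ≠ 0 ∧ (hessian L1v p).mulVec v = c • v) := by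
  obtain ⟨hs5, hs5gt1, hs5le3⟩ := sqrt5_facts
  have hs5nn : (0:ℝ) ≤ Real.sqrt 5 := Real.sqrt_nonneg 5
  have ha2 : ((Real.sqrt 5 - 1)/2)^2 = 1 - (Real.sqrt 5 - 1)/2 := by
    linear_combination (1/4) * hs5
  have hannep : (0:ℝ) < (Real.sqrt 5 - 1)/2 := by linarith
  have hr2 : (Real.sqrt ((Real.sqrt 5 - 1)/2))^2 = (Real.sqrt 5 - 1)/2 :=
    Real.sq_sqrt (le_of_lt hannep)
  have hrpos : 0 < Real.sqrt ((Real.sqrt 5 - 1)/2) := Real.sqrt_pos.mpr hannep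
  have hrnn : 0 ≤ Real.sqrt ((Real.sqrt 5 - 1)/2) := le_of_lt hrpos
  -- arccos values
  have hc1 : Real.cos (arccos ((Real.sqrt 5 - 1)/2)) = (Real.sqrt 5 - 1)/2 :=
    Real.cos_arccos (by linarith) (by linarith)
  have hs1 : Real.sin (arccos ((Real.sqrt 5 - 1)/2)) = Real.sqrt ((Real.sqrt 5 - 1)/2) := by
    rw [Real.sin_arccos,
      show 1 - ((Real.sqrt 5 - 1)/2)^2 = (Real.sqrt 5 - 1)/2 by linear_combination (-(1/4)) * hs5]
  -- arctan values
  have h2s5nn : (0:ℝ) ≤ 2 + Real.sqrt 5 := by linarith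
  have h2s5pos : (0:ℝ) < 2 + Real.sqrt 5 := by linarith
  have hT2 : (2 * Real.sqrt (2 + Real.sqrt 5))^2 = 4*(2 + Real.sqrt 5) := by
    rw [mul_pow, Real.sq_sqrt h2s5nn]; norm_num
  have h1T : 1 + (2 * Real.sqrt (2 + Real.sqrt 5))^2 = (2 + Real.sqrt 5)^2 := by
    rw [hT2]; linear_combination (-1 : ℝ) * hs5
  have hsq1T : Real.sqrt (1 + (2 * Real.sqrt (2 + Real.sqrt 5))^2) = 2 + Real.sqrt 5 := by
    rw [h1T]; exact Real.sqrt_sq (by linarith)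
  have hcosA : Real.cos (arctan (2 * Real.sqrt (2 + Real.sqrt 5)))
      = 2*((Real.sqrt 5 - 1)/2) - 1 := by
    rw [Real.cos_arctan, hsq1T, div_eq_iff (ne_of_gt h2s5pos)]
    linear_combination (-1 : ℝ) * hs5
  have hsinA : Real.sin (arctan (2 * Real.sqrt (2 + Real.sqrt 5)))
      = 2*(((Real.sqrt 5 - 1)/2) * Real.sqrt ((Real.sqrt 5 - 1)/2)) := by
    rw [Real.sin_arctan, hsq1T]
    have h1 : 0 ≤ 2 * Real.sqrt (2 + Real.sqrt 5) / (2 + Real.sqrt 5) := by positivity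
    have h2 : 0 ≤ 2*(((Real.sqrt 5 - 1)/2) * Real.sqrt ((Real.sqrt 5 - 1)/2)) := by
      have := mul_nonneg (le_of_lt hannep) hrnn
      linarith
    have h3 : (2 * Real.sqrt (2 + Real.sqrt 5) / (2 + Real.sqrt 5))^2
        = (2*(((Real.sqrt 5 - 1)/2) * Real.sqrt ((Real.sqrt 5 - 1)/2)))^2 := by
      rw [div_pow, hT2, div_eq_iff (pow_ne_zero 2 (ne_of_gt h2s5pos))]
      linear_combination ((-2) + (-1/2)*(Real.sqrt 5)^2 + (-1/2)*(Real.sqrt 5)^3) * hs5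
        + ((-4) + (4)*(Real.sqrt 5) + (3)*(Real.sqrt 5)^2 + (-2)*(Real.sqrt 5)^3
            + (-1)*(Real.sqrt 5)^4) * hr2
    calc 2 * Real.sqrt (2 + Real.sqrt 5) / (2 + Real.sqrt 5)
        = Real.sqrt ((2 * Real.sqrt (2 + Real.sqrt 5) / (2 + Real.sqrt 5))^2) :=
          (Real.sqrt_sq h1).symm
      _ = Real.sqrt ((2*(((Real.sqrt 5 - 1)/2) * Real.sqrt ((Real.sqrt 5 - 1)/2)))^2) := by
          rw [h3]
      _ = 2*(((Real.sqrt 5 - 1)/2) * Real.sqrt ((Real.sqrt 5 - 1)/2)) := Real.sqrt_sq h2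
  -- half-angle values at q = (1/2) * arctan T
  have h2q : 2 * ((1/2) * arctan (2 * Real.sqrt (2 + Real.sqrt 5)))
      = arctan (2 * Real.sqrt (2 + Real.sqrt 5)) := by ring
  have hcq2 : Real.cos ((1/2) * arctan (2 * Real.sqrt (2 + Real.sqrt 5)))^2
      = (Real.sqrt 5 - 1)/2 := by
    have h := Real.cos_sq ((1/2) * arctan (2 * Real.sqrt (2 + Real.sqrt 5)))
    rw [h2q, hcosA] at h
    rw [h]; ring
  have hsq2 : Real.sin ((1/2) * arctan (2 * Real.sqrt (2 + Real.sqrt 5)))^2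
      = 1 - (Real.sqrt 5 - 1)/2 := by
    have h := Real.sin_sq_add_cos_sq ((1/2) * arctan (2 * Real.sqrt (2 + Real.sqrt 5)))
    rw [hcq2] at h; linarith
  have hscq : Real.sin ((1/2) * arctan (2 * Real.sqrt (2 + Real.sqrt 5)))
        * Real.cos ((1/2) * arctan (2 * Real.sqrt (2 + Real.sqrt 5)))
      = ((Real.sqrt 5 - 1)/2) * Real.sqrt ((Real.sqrt 5 - 1)/2) := by
    have h := Real.sin_two_mul ((1/2) * arctan (2 * Real.sqrt (2 + Real.sqrt 5)))
    rw [h2q, hsinA] at h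
    linear_combination (-(1/2)) * h
  rcases hp with hp | hp <;> subst hp
  · -- first point, e = -1
    refine key _ ((Real.sqrt 5 - 1)/2) (Real.sqrt ((Real.sqrt 5 - 1)/2)) (-1)
      ha2 hr2 hrpos (by norm_num) ?_ ?_ ?_ ?_ ?_ ?_ ?_
    · simp
    · simp
    · simpa using hs1
    · simpa using hc1
    · simp only [Matrix.cons_val_two, Matrix.tail_cons, Matrix.head_cons, Real.sin_pi_sub]
      exact hsq2
    · simp only [Matrix.cons_val_two, Matrix.tail_cons, Matrix.head_cons, Real.cos_pi_sub,
        neg_sq]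
      exact hcq2
    · simp only [Matrix.cons_val_two, Matrix.tail_cons, Matrix.head_cons, Real.sin_pi_sub,
        Real.cos_pi_sub]
      linear_combination (-1 : ℝ) * hscq
  · -- second point, e = 1
    refine key _ ((Real.sqrt 5 - 1)/2) (Real.sqrt ((Real.sqrt 5 - 1)/2)) 1
      ha2 hr2 hrpos (by norm_num) ?_ ?_ ?_ ?_ ?_ ?_ ?_
    · simp
    · simp
    · simpa using hs1
    · simpa using hc1
    · simpa using hsq2
    · simpa using hcq2
    · simp only [Matrix.cons_val_two, Matrix.tail_cons, Matrix.head_cons]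
      linear_combination hscq
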